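/- Let G and H be groups, let n ≥ 1, and let α : G → H be a surjective group homomorphism whose kernel is contained in the center of G (i.e., the extension 1 → ker α → G → H → 1 is central). Then the diagonal subgroup Δ_n(G) is normal in G^n_H, and the map G^n_H/Δ_n(G) → (ker α)^{n-1} induced by (g_1, …, g_n) ↦ (g_1 g_n^{-1}, …, g_{n-1} g_n^{-1}) is a well-defined group isomorphism. -/

import Mathlib

/-- The `n`-fold fibre product `G^n_H` of a homomorphism `α : G →* H`,
as a subgroup of `Gⁿ`. -/
def fiberProd {G H : Type*} [Group G] [Group H] (α : G →* H) (n : ℕ) :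
    Subgroup (Fin n → G) where
  carrier := {g | ∀ i j, α (g i) = α (g j)}
  one_mem' := fun _ _ => rfl
  mul_mem' := by
    intro a b ha hb i j
    simp only [Pi.mul_apply, map_mul, ha i j, hb i j]
  inv_mem' := by
    intro a ha i j
    simp only [Pi.inv_apply, map_inv, ha i j]

/-- The diagonal homomorphism `Δ_n : G →* Gⁿ`. -/
def diagHom (G : Type*) [Group G] (n : ℕ) : G →* (Fin n → G) where
  toFun g := fun _ => g
  map_one' := rfl
  map_mul' _ _ := rfl

/-- key commutation fact: if `α a = α b` then conjugation by `a` and `b` agree. -/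
theorem conj_eq_of_alpha_eq {G H : Type*} [Group G] [Group H] (α : G →* H)
    (hc : α.ker ≤ Subgroup.center G) {a b : G}
    (h : α a = α b) (c : G) : a * c * a⁻¹ = b * c * b⁻¹ := by
  have hk : a * b⁻¹ ∈ α.ker := by
    simp [MonoidHom.mem_ker, h]
  have hcen := Subgroup.mem_center_iff.mp (hc hk) (b * c * b⁻¹)
  calc a * c * a⁻¹
      = (a * b⁻¹) * (b * c * b⁻¹) * (a * b⁻¹)⁻¹ := by group
    _ = (b * c * b⁻¹) * (a * b⁻¹) * (a * b⁻¹)⁻¹ := by rw [← hcen]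
    _ = b * c * b⁻¹ := by group

/-- The difference map `G^n_H →* (ker α)^(n-1)`. -/
def diffHom {G H : Type*} [Group G] [Group H] {n : ℕ} (α : G →* H)
    (hn : 1 ≤ n) (hc : α.ker ≤ Subgroup.center G) :
    (fiberProd α n) →* (Fin (n - 1) → α.ker) where
  toFun x := fun i => ⟨x.1 (Fin.castLE (Nat.sub_le n 1) i) * (x.1 ⟨n - 1, Nat.sub_lt hn Nat.one_pos⟩)⁻¹, by
    have := x.2 (Fin.castLE (Nat.sub_le n 1) i) ⟨n - 1, Nat.sub_lt hn Nat.one_pos⟩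
    simp [MonoidHom.mem_ker, this]⟩
  map_one' := by
    funext i
    ext
    simp
  map_mul' x y := by
    funext i
    ext
    simp only [Pi.mul_apply, Subgroup.coe_mul, Submonoid.coe_mul]
    set a := x.1 (Fin.castLE (Nat.sub_le n 1) i)
    set b := y.1 (Fin.castLE (Nat.sub_le n 1) i)
    set a' := x.1 ⟨n - 1, Nat.sub_lt hn Nat.one_pos⟩
    set b' := y.1 ⟨n - 1, Nat.sub_lt hn Nat.one_pos⟩
    show a * b * (a' * b')⁻¹ = (a * a'⁻¹) * (b * b'⁻¹)
    have hk : b * b'⁻¹ ∈ α.ker := by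
      have := y.2 (Fin.castLE (Nat.sub_le n 1) i) ⟨n - 1, Nat.sub_lt hn Nat.one_pos⟩
      simp [MonoidHom.mem_ker, b, b', this]
    have hcen := Subgroup.mem_center_iff.mp (hc hk) a'⁻¹
    calc a * b * (a' * b')⁻¹ = a * ((b * b'⁻¹) * a'⁻¹) := by group
      _ = a * (a'⁻¹ * (b * b'⁻¹)) := by rw [hcen]
      _ = (a * a'⁻¹) * (b * b'⁻¹) := by group

/-- Let `α : G → H` be a surjective group homomorphism with central
kernel, and `n ≥ 1`. Then the diagonal subgroup `Δ_n(G)` is normal in the fibre product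
`G^n_H`, and the map `G^n_H / Δ_n(G) → (ker α)^{n-1}` induced by
`(g_1, …, g_n) ↦ (g_1 g_n⁻¹, …, g_{n-1} g_n⁻¹)` is a well-defined group isomorphism. -/
theorem stmt_7 {G H : Type*} [Group G] [Group H] (n : ℕ) (hn : 1 ≤ n)
    (α : G →* H) (hα : Function.Surjective α)
    (hc : α.ker ≤ Subgroup.center G) :
    (∀ g ∈ fiberProd α n, ∀ x ∈ (diagHom G n).range, g * x * g⁻¹ ∈ (diagHom G n).range) ∧
    ∀ [inst : (((diagHom G n).range).subgroupOf (fiberProd α n)).Normal],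
      ∃ e : (fiberProd α n) ⧸ (((diagHom G n).range).subgroupOf (fiberProd α n)) ≃*
          (Fin (n - 1) → α.ker),
        ∀ x : fiberProd α n, ∀ i : Fin (n - 1),
          ((e (QuotientGroup.mk x)) i : G)
            = x.1 (Fin.castLE (by omega) i) * (x.1 ⟨n - 1, by omega⟩)⁻¹ := by
  constructor
  · rintro g hg x ⟨c, rfl⟩
    refine ⟨g ⟨0, hn⟩ * c * (g ⟨0, hn⟩)⁻¹, ?_⟩
    funext i
    exact (conj_eq_of_alpha_eq α hc (hg ⟨0, hn⟩ i) c).symm ▸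
      (conj_eq_of_alpha_eq α hc (hg ⟨0, hn⟩ i) c)
  · intro inst
    have hker : ((diagHom G n).range).subgroupOf (fiberProd α n) = (diffHom α hn hc).ker := by
      ext x
      simp only [MonoidHom.mem_ker, Subgroup.mem_subgroupOf, MonoidHom.mem_range]
      constructor
      · rintro ⟨c, hcx⟩
        funext i
        ext
        have h1 : x.1 (Fin.castLE (by omega) i) = c := by rw [← hcx]; rfl
        have h2 : x.1 ⟨n - 1, by omega⟩ = c := by rw [← hcx]; rfl
        show x.1 (Fin.castLE (by omega) i) * (x.1 ⟨n - 1, by omega⟩)⁻¹ = 1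
        rw [h1, h2, mul_inv_cancel]
      · intro h
        refine ⟨x.1 ⟨n - 1, by omega⟩, ?_⟩
        funext j
        show x.1 ⟨n - 1, by omega⟩ = x.1 j
        by_cases hj : (j : ℕ) < n - 1
        · have := congrFun h ⟨j, hj⟩
          have h1 : x.1 (Fin.castLE (by omega) (⟨j, hj⟩ : Fin (n - 1)))
              * (x.1 ⟨n - 1, by omega⟩)⁻¹ = 1 := congrArg Subtype.val this
          have hcast : Fin.castLE (by omega : n - 1 ≤ n) (⟨j, hj⟩ : Fin (n - 1)) = j := by
            ext; rfl
          rw [hcast] at h1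
          have := mul_inv_eq_one.mp h1
          exact this.symm
        · have : j = ⟨n - 1, by omega⟩ := by
            simp only [Fin.ext_iff, Fin.val_mk]
            have := j.2
            omega
          rw [this]
    have hsurj : Function.Surjective (diffHom α hn hc) := by
      intro k
      refine ⟨⟨fun j => if hj : (j : ℕ) < n - 1 then (k ⟨j, hj⟩ : G) else 1, ?_⟩, ?_⟩
      · intro i j
        have hval : ∀ i : Fin n,
            α (if hj : (i : ℕ) < n - 1 then (k ⟨i, hj⟩ : G) else 1) = 1 := by
          intro i
          by_cases hj : (i : ℕ) < n - 1
          · simp only [hj, dif_pos]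
            exact (k ⟨i, hj⟩).2
          · simp [hj]
        rw [hval i, hval j]
      · funext i
        ext
        show (if hj : ((Fin.castLE (by omega) i : Fin n) : ℕ) < n - 1 then
            (k ⟨(Fin.castLE (by omega) i : Fin n), hj⟩ : G) else 1)
            * (if hj : ((⟨n - 1, by omega⟩ : Fin n) : ℕ) < n - 1 then
            (k ⟨n - 1, hj⟩ : G) else 1)⁻¹ = k i
        have h1 : ((Fin.castLE (by omega : n - 1 ≤ n) i : Fin n) : ℕ) < n - 1 := i.2
        rw [dif_pos h1, dif_neg (by simp)]
        simp
    refine ⟨(QuotientGroup.quotientMulEquivOfEq hker).trans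
      (QuotientGroup.quotientKerEquivOfSurjective _ hsurj), fun x i => ?_⟩
    have : ((QuotientGroup.quotientMulEquivOfEq hker).trans
        (QuotientGroup.quotientKerEquivOfSurjective _ hsurj)) (QuotientGroup.mk x)
        = diffHom α hn hc x := by
      rfl
    rw [this]
    rfl
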